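/- Let G be a group, S ⊆ G, and ⟨S⟩ the subsemigroup of G generated by S. With D(G) the inductive family defined by: S ∈ D(G) if S ∩ S⁻¹ ≠ ∅, and T ∪ {a}, T ∪ {b} ∈ D(G) implies T ∪ {a*b} ∈ D(G), we have: S ∈ D(G) if and only if ⟨S⟩ ∈ D(G). -/
import Mathlib


/-- The inductive family `D(G)` of subsets of a group `G`: a set is in `D(G)` if it meets
its own set of inverses, and the family is closed under the rule
`T ∪ {a}, T ∪ {b} ∈ D(G) ⟹ T ∪ {a*b} ∈ D(G)`. -/
inductive RightD {G : Type*} [Group G] : Set G → Prop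
  | base (S : Set G) (a : G) (ha : a ∈ S) (hinv : a⁻¹ ∈ S) : RightD S
  | step (T : Set G) (a b : G) (h1 : RightD (T ∪ {a})) (h2 : RightD (T ∪ {b})) :
      RightD (T ∪ {a * b})

namespace RightDAux

variable {G : Type*} [Group G]

lemma mono {U : Set G} (h : RightD U) : ∀ V : Set G, U ⊆ V → RightD V := by
  induction h with
  | base S a ha hinv => exact fun V hV => RightD.base V a (hV ha) (hV hinv)
  | step T a b h1 h2 ih1 ih2 =>
    intro V hV
    have hT : T ⊆ V := fun x hx => hV (Or.inl hx)
    have hab : a * b ∈ V := hV (Or.inr rfl)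
    have H := RightD.step V a b
      (ih1 _ (Set.union_subset_union_left _ hT))
      (ih2 _ (Set.union_subset_union_left _ hT))
    rwa [Set.union_eq_self_of_subset_right (Set.singleton_subset_iff.mpr hab)] at H

lemma inv_mem_imp {S : Set G} {c : G} (hc : c ∈ Subsemigroup.closure S) :
    ∀ T : Set G, S ⊆ T → c⁻¹ ∈ T → RightD T := by
  induction hc using Subsemigroup.closure_induction with
  | mem s hs =>
    intro T hST h
    exact RightD.base T s⁻¹ h (by simpa using hST hs)
  | mul x y hx hy ihx ihy =>
    intro T hST h
    have h1 : RightD (T ∪ {y⁻¹}) :=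
      ihy _ (hST.trans Set.subset_union_left) (Or.inr rfl)
    have h2 : RightD (T ∪ {x⁻¹}) :=
      ihx _ (hST.trans Set.subset_union_left) (Or.inr rfl)
    have H := RightD.step T y⁻¹ x⁻¹ h1 h2
    rwa [Set.union_eq_self_of_subset_right (Set.singleton_subset_iff.mpr
      (by simpa [mul_inv_rev] using h))] at H

lemma exists_head {S : Set G} {c : G} (hc : c ∈ Subsemigroup.closure S) :
    ∃ s ∈ S, c = s ∨ ∃ w ∈ Subsemigroup.closure S, c = s * w := by
  induction hc using Subsemigroup.closure_induction with
  | mem s hs => exact ⟨s, hs, Or.inl rfl⟩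
  | mul x y hx hy ihx ihy =>
    obtain ⟨s, hs, h⟩ := ihx
    rcases h with h | ⟨w, hw, h⟩
    · exact ⟨s, hs, Or.inr ⟨y, hy, by rw [h]⟩⟩
    · exact ⟨s, hs, Or.inr ⟨w * y, mul_mem hw hy, by rw [h, mul_assoc]⟩⟩

lemma of_one_mem {S : Set G} (h : (1 : G) ∈ Subsemigroup.closure S) : RightD S := by
  obtain ⟨s, hs, h1 | ⟨w, hw, h1⟩⟩ := exists_head h
  · refine RightD.base S s hs ?_
    have : s⁻¹ = s := by rw [← h1, inv_one, h1]
    rwa [this]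
  · have hsw : s⁻¹ = w := inv_eq_of_mul_eq_one_right h1.symm
    exact inv_mem_imp (c := s⁻¹) (hsw ▸ hw) S subset_rfl (by simpa using hs)

lemma main {U : Set G} (h : RightD U) :
    ∀ T A : Set G, U ⊆ T ∪ (Subsemigroup.closure A : Set G) → RightD (T ∪ A) := by
  induction h with
  | base S x hx hinv =>
    intro T A hU
    have hsub : T ∪ (Subsemigroup.closure A : Set G) ⊆
        (Subsemigroup.closure (T ∪ A) : Set G) := by
      apply Set.union_subset
      · exact fun t ht => Subsemigroup.subset_closure (Or.inl ht)
      · exact Subsemigroup.closure_mono Set.subset_union_right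
    have h1 : x ∈ Subsemigroup.closure (T ∪ A) := hsub (hU hx)
    have h2 : x⁻¹ ∈ Subsemigroup.closure (T ∪ A) := hsub (hU hinv)
    exact of_one_mem (by simpa using mul_mem h1 h2)
  | step T' a b h1 h2 ih1 ih2 =>
    intro T A hU
    have hT' : T' ⊆ T ∪ (Subsemigroup.closure A : Set G) :=
      fun x hx => hU (Or.inl hx)
    have HA : RightD ((T ∪ A) ∪ {a}) := by
      have := ih1 T (A ∪ {a}) ?_
      · rwa [← Set.union_assoc] at this
      · apply Set.union_subset
        · exact hT'.trans (Set.union_subset_union_right _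
            (Subsemigroup.closure_mono Set.subset_union_left))
        · exact fun z hz => Or.inr (Subsemigroup.subset_closure (Or.inr hz))
    rcases hU (Set.mem_union_right _ rfl : a * b ∈ T' ∪ {a * b}) with habT | habA
    · -- a * b ∈ T
      have HB : RightD ((T ∪ A) ∪ {b}) := by
        have := ih2 T (A ∪ {b}) ?_
        · rwa [← Set.union_assoc] at this
        · apply Set.union_subset
          · exact hT'.trans (Set.union_subset_union_right _
              (Subsemigroup.closure_mono Set.subset_union_left))
          · exact fun z hz => Or.inr (Subsemigroup.subset_closure (Or.inr hz))
      have H := RightD.step (T ∪ A) a b HA HB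
      rwa [Set.union_eq_self_of_subset_right (Set.singleton_subset_iff.mpr
        (Set.mem_union_left A habT))] at H
    · -- a * b ∈ closure A
      obtain ⟨α, hα, hd⟩ := exists_head habA
      have hb : b ∈ Subsemigroup.closure (A ∪ {a⁻¹ * α}) := by
        have hx : a⁻¹ * α ∈ Subsemigroup.closure (A ∪ {a⁻¹ * α}) :=
          Subsemigroup.subset_closure (Or.inr rfl)
        rcases hd with hd | ⟨w, hw, hd⟩
        · have : b = a⁻¹ * α := by rw [← hd, inv_mul_cancel_left]
          rwa [this]
        · have : b = (a⁻¹ * α) * w := by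
            rw [mul_assoc, ← hd, inv_mul_cancel_left]
          rw [this]
          exact mul_mem hx ((Subsemigroup.closure_mono Set.subset_union_left) hw)
      have HB : RightD ((T ∪ A) ∪ {a⁻¹ * α}) := by
        have := ih2 T (A ∪ {a⁻¹ * α}) ?_
        · rwa [← Set.union_assoc] at this
        · apply Set.union_subset
          · exact hT'.trans (Set.union_subset_union_right _
              (Subsemigroup.closure_mono Set.subset_union_left))
          · exact fun z hz => by
              simp only [Set.mem_singleton_iff] at hz
              exact Or.inr (hz ▸ hb)
      have H := RightD.step (T ∪ A) a (a⁻¹ * α) HA HB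
      rw [mul_inv_cancel_left] at H
      rwa [Set.union_eq_self_of_subset_right (Set.singleton_subset_iff.mpr
        (Set.mem_union_right T hα))] at H

end RightDAux

theorem stmt6 {G : Type*} [Group G] (S : Set G) :
    RightD S ↔ RightD (Subsemigroup.closure S : Set G) := by
  constructor
  · intro h
    exact RightDAux.mono h _ Subsemigroup.subset_closure
  · intro h
    have := RightDAux.main h ∅ S (by simp)
    simpa using this
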